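/- The transformation r3 of the quantum degenerate Garnier system G(5) is a quantum canonical transformation: suppose x1 is a unit of R, and define q1 = x1^{-1}, p1 = −2x2^2x1^{-2} − x1^2y1 − x1x2y2 − (α1 − 2α2)·x1 + 2x1^{-1} − 2t2, q2 = x2x1^{-1}, p2 = 2x2^3x1^{-3} − 4x2x1^{-2} + x1y2 − 2t1. Then (q1, p1, q2, p2) again satisfy the canonical commutation relations: [q1,p1] = [q2,p2] = h and [q1,q2] = [p1,p2] = [q1,p2] = [q2,p1] = 0. -/
import Mathlib


set_option maxHeartbeats 4000000 in
/-- The transformation r3 of the quantum degenerate Garnier system G(5) is a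
quantum canonical transformation. -/
theorem quantum_garnier_G5_r3_canonical
    {R : Type*} [Ring R]
    (h α1 α2 t1 t2 : R)
    (hh : ∀ r : R, h * r = r * h)
    (hA1 : ∀ r : R, α1 * r = r * α1)
    (hA2 : ∀ r : R, α2 * r = r * α2)
    (ht1 : ∀ r : R, t1 * r = r * t1)
    (ht2 : ∀ r : R, t2 * r = r * t2)
    (x1 y1 x2 y2 : R)
    (hx1y1 : x1 * y1 - y1 * x1 = h)
    (hx2y2 : x2 * y2 - y2 * x2 = h)
    (hx1x2 : x1 * x2 - x2 * x1 = 0)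
    (hy1y2 : y1 * y2 - y2 * y1 = 0)
    (hx1y2 : x1 * y2 - y2 * x1 = 0)
    (hx2y1 : x2 * y1 - y1 * x2 = 0)
    (x1i : R) (hx1il : x1i * x1 = 1) (hx1ir : x1 * x1i = 1)
    (q1 p1 q2 p2 : R)
    (hq1 : q1 = x1i)
    (hp1 : p1 = -(2 * x2^2 * x1i^2) - x1^2 * y1 - x1 * x2 * y2
      - (α1 - 2 * α2) * x1 + 2 * x1i - 2 * t2)
    (hq2 : q2 = x2 * x1i)
    (hp2 : p2 = 2 * x2^3 * x1i^3 - 4 * x2 * x1i^2 + x1 * y2 - 2 * t1) :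
    q1 * p1 - p1 * q1 = h ∧ q2 * p2 - p2 * q2 = h ∧
    q1 * q2 - q2 * q1 = 0 ∧ p1 * p2 - p2 * p1 = 0 ∧
    q1 * p2 - p2 * q1 = 0 ∧ q2 * p1 - p1 * q2 = 0 := by
  rw [hq1, hp1, hq2, hp2]
  have e12 : x1 * x2 = x2 * x1 := sub_eq_zero.mp hx1x2
  have e1y2 : x1 * y2 = y2 * x1 := sub_eq_zero.mp hx1y2
  have e2y1 : x2 * y1 = y1 * x2 := sub_eq_zero.mp hx2y1
  have ey12 : y1 * y2 = y2 * y1 := sub_eq_zero.mp hy1y2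
  have s_x2x1 : x2 * x1 = x1 * x2 := e12.symm
  have s_y1x1 : y1 * x1 = x1 * y1 - h := by rw [← hx1y1]; abel
  have s_y2x1 : y2 * x1 = x1 * y2 := e1y2.symm
  have s_y1x2 : y1 * x2 = x2 * y1 := e2y1.symm
  have s_y2x2 : y2 * x2 = x2 * y2 - h := by rw [← hx2y2]; abel
  have s_y2y1 : y2 * y1 = y1 * y2 := ey12.symm
  have conj : ∀ b : R, x1 * b = b * x1 → b * x1i = x1i * b := by
    intro b e
    have h1 : x1i * (x1 * (b * x1i)) = b * x1i := by rw [← mul_assoc, hx1il, one_mul]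
    have h2 : x1 * (b * x1i) = b * (x1 * x1i) := by rw [← mul_assoc, e, mul_assoc]
    rw [h2, hx1ir, mul_one] at h1
    exact h1.symm
  have s_x2x1i : x2 * x1i = x1i * x2 := conj x2 e12
  have s_y2x1i : y2 * x1i = x1i * y2 := conj y2 e1y2
  have s_y1x1i : y1 * x1i = x1i * y1 + h * (x1i * x1i) := by
    have e : x1 * y1 = y1 * x1 + h := by rw [← hx1y1]; abel
    have h1 : x1i * (x1 * (y1 * x1i)) = y1 * x1i := by rw [← mul_assoc, hx1il, one_mul]
    have h2 : x1 * (y1 * x1i) = (y1 * x1 + h) * x1i := by rw [← mul_assoc, e]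
    rw [h2] at h1
    rw [← h1, add_mul, mul_add, mul_assoc, hx1ir, mul_one, ← mul_assoc, ← hh x1i, mul_assoc]
  have i1 : ∀ r : R, x1i * (x1 * r) = r := fun r => by rw [← mul_assoc, hx1il, one_mul]
  have i2 : ∀ r : R, x1 * (x1i * r) = r := fun r => by rw [← mul_assoc, hx1ir, one_mul]
  have t_x2x1 : ∀ r : R, x2 * (x1 * r) = x1 * (x2 * r) := fun r => by rw [← mul_assoc, s_x2x1]; noncomm_ring
  have t_y1x1 : ∀ r : R, y1 * (x1 * r) = x1 * (y1 * r) - h * r := fun r => by rw [← mul_assoc, s_y1x1]; noncomm_ring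
  have t_y2x1 : ∀ r : R, y2 * (x1 * r) = x1 * (y2 * r) := fun r => by rw [← mul_assoc, s_y2x1]; noncomm_ring
  have t_y1x2 : ∀ r : R, y1 * (x2 * r) = x2 * (y1 * r) := fun r => by rw [← mul_assoc, s_y1x2]; noncomm_ring
  have t_y2x2 : ∀ r : R, y2 * (x2 * r) = x2 * (y2 * r) - h * r := fun r => by rw [← mul_assoc, s_y2x2]; noncomm_ring
  have t_y2y1 : ∀ r : R, y2 * (y1 * r) = y1 * (y2 * r) := fun r => by rw [← mul_assoc, s_y2y1]; noncomm_ring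
  have t_x2x1i : ∀ r : R, x2 * (x1i * r) = x1i * (x2 * r) := fun r => by rw [← mul_assoc, s_x2x1i]; noncomm_ring
  have t_y2x1i : ∀ r : R, y2 * (x1i * r) = x1i * (y2 * r) := fun r => by rw [← mul_assoc, s_y2x1i]; noncomm_ring
  have t_y1x1i : ∀ r : R, y1 * (x1i * r) = x1i * (y1 * r) + h * (x1i * (x1i * r)) := fun r => by rw [← mul_assoc, s_y1x1i]; noncomm_ring
  have sc_hh_x1 : x1 * h = h * x1 := (hh x1).symm
  have tc_hh_x1 : ∀ r : R, x1 * (h * r) = h * (x1 * r) := fun r => by rw [← mul_assoc, (hh x1).symm, mul_assoc]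
  have sc_hh_x1i : x1i * h = h * x1i := (hh x1i).symm
  have tc_hh_x1i : ∀ r : R, x1i * (h * r) = h * (x1i * r) := fun r => by rw [← mul_assoc, (hh x1i).symm, mul_assoc]
  have sc_hh_x2 : x2 * h = h * x2 := (hh x2).symm
  have tc_hh_x2 : ∀ r : R, x2 * (h * r) = h * (x2 * r) := fun r => by rw [← mul_assoc, (hh x2).symm, mul_assoc]
  have sc_hh_y1 : y1 * h = h * y1 := (hh y1).symm
  have tc_hh_y1 : ∀ r : R, y1 * (h * r) = h * (y1 * r) := fun r => by rw [← mul_assoc, (hh y1).symm, mul_assoc]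
  have sc_hh_y2 : y2 * h = h * y2 := (hh y2).symm
  have tc_hh_y2 : ∀ r : R, y2 * (h * r) = h * (y2 * r) := fun r => by rw [← mul_assoc, (hh y2).symm, mul_assoc]
  have sc_hA1_x1 : x1 * α1 = α1 * x1 := (hA1 x1).symm
  have tc_hA1_x1 : ∀ r : R, x1 * (α1 * r) = α1 * (x1 * r) := fun r => by rw [← mul_assoc, (hA1 x1).symm, mul_assoc]
  have sc_hA1_x1i : x1i * α1 = α1 * x1i := (hA1 x1i).symm
  have tc_hA1_x1i : ∀ r : R, x1i * (α1 * r) = α1 * (x1i * r) := fun r => by rw [← mul_assoc, (hA1 x1i).symm, mul_assoc]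
  have sc_hA1_x2 : x2 * α1 = α1 * x2 := (hA1 x2).symm
  have tc_hA1_x2 : ∀ r : R, x2 * (α1 * r) = α1 * (x2 * r) := fun r => by rw [← mul_assoc, (hA1 x2).symm, mul_assoc]
  have sc_hA1_y1 : y1 * α1 = α1 * y1 := (hA1 y1).symm
  have tc_hA1_y1 : ∀ r : R, y1 * (α1 * r) = α1 * (y1 * r) := fun r => by rw [← mul_assoc, (hA1 y1).symm, mul_assoc]
  have sc_hA1_y2 : y2 * α1 = α1 * y2 := (hA1 y2).symm
  have tc_hA1_y2 : ∀ r : R, y2 * (α1 * r) = α1 * (y2 * r) := fun r => by rw [← mul_assoc, (hA1 y2).symm, mul_assoc]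
  have sc_hA2_x1 : x1 * α2 = α2 * x1 := (hA2 x1).symm
  have tc_hA2_x1 : ∀ r : R, x1 * (α2 * r) = α2 * (x1 * r) := fun r => by rw [← mul_assoc, (hA2 x1).symm, mul_assoc]
  have sc_hA2_x1i : x1i * α2 = α2 * x1i := (hA2 x1i).symm
  have tc_hA2_x1i : ∀ r : R, x1i * (α2 * r) = α2 * (x1i * r) := fun r => by rw [← mul_assoc, (hA2 x1i).symm, mul_assoc]
  have sc_hA2_x2 : x2 * α2 = α2 * x2 := (hA2 x2).symm
  have tc_hA2_x2 : ∀ r : R, x2 * (α2 * r) = α2 * (x2 * r) := fun r => by rw [← mul_assoc, (hA2 x2).symm, mul_assoc]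
  have sc_hA2_y1 : y1 * α2 = α2 * y1 := (hA2 y1).symm
  have tc_hA2_y1 : ∀ r : R, y1 * (α2 * r) = α2 * (y1 * r) := fun r => by rw [← mul_assoc, (hA2 y1).symm, mul_assoc]
  have sc_hA2_y2 : y2 * α2 = α2 * y2 := (hA2 y2).symm
  have tc_hA2_y2 : ∀ r : R, y2 * (α2 * r) = α2 * (y2 * r) := fun r => by rw [← mul_assoc, (hA2 y2).symm, mul_assoc]
  have sc_ht1_x1 : x1 * t1 = t1 * x1 := (ht1 x1).symm
  have tc_ht1_x1 : ∀ r : R, x1 * (t1 * r) = t1 * (x1 * r) := fun r => by rw [← mul_assoc, (ht1 x1).symm, mul_assoc]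
  have sc_ht1_x1i : x1i * t1 = t1 * x1i := (ht1 x1i).symm
  have tc_ht1_x1i : ∀ r : R, x1i * (t1 * r) = t1 * (x1i * r) := fun r => by rw [← mul_assoc, (ht1 x1i).symm, mul_assoc]
  have sc_ht1_x2 : x2 * t1 = t1 * x2 := (ht1 x2).symm
  have tc_ht1_x2 : ∀ r : R, x2 * (t1 * r) = t1 * (x2 * r) := fun r => by rw [← mul_assoc, (ht1 x2).symm, mul_assoc]
  have sc_ht1_y1 : y1 * t1 = t1 * y1 := (ht1 y1).symm
  have tc_ht1_y1 : ∀ r : R, y1 * (t1 * r) = t1 * (y1 * r) := fun r => by rw [← mul_assoc, (ht1 y1).symm, mul_assoc]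
  have sc_ht1_y2 : y2 * t1 = t1 * y2 := (ht1 y2).symm
  have tc_ht1_y2 : ∀ r : R, y2 * (t1 * r) = t1 * (y2 * r) := fun r => by rw [← mul_assoc, (ht1 y2).symm, mul_assoc]
  have sc_ht2_x1 : x1 * t2 = t2 * x1 := (ht2 x1).symm
  have tc_ht2_x1 : ∀ r : R, x1 * (t2 * r) = t2 * (x1 * r) := fun r => by rw [← mul_assoc, (ht2 x1).symm, mul_assoc]
  have sc_ht2_x1i : x1i * t2 = t2 * x1i := (ht2 x1i).symm
  have tc_ht2_x1i : ∀ r : R, x1i * (t2 * r) = t2 * (x1i * r) := fun r => by rw [← mul_assoc, (ht2 x1i).symm, mul_assoc]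
  have sc_ht2_x2 : x2 * t2 = t2 * x2 := (ht2 x2).symm
  have tc_ht2_x2 : ∀ r : R, x2 * (t2 * r) = t2 * (x2 * r) := fun r => by rw [← mul_assoc, (ht2 x2).symm, mul_assoc]
  have sc_ht2_y1 : y1 * t2 = t2 * y1 := (ht2 y1).symm
  have tc_ht2_y1 : ∀ r : R, y1 * (t2 * r) = t2 * (y1 * r) := fun r => by rw [← mul_assoc, (ht2 y1).symm, mul_assoc]
  have sc_ht2_y2 : y2 * t2 = t2 * y2 := (ht2 y2).symm
  have tc_ht2_y2 : ∀ r : R, y2 * (t2 * r) = t2 * (y2 * r) := fun r => by rw [← mul_assoc, (ht2 y2).symm, mul_assoc]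
  have scc_hA1_hh : α1 * h = h * α1 := (hh α1).symm
  have tcc_hA1_hh : ∀ r : R, α1 * (h * r) = h * (α1 * r) := fun r => by rw [← mul_assoc, (hh α1).symm, mul_assoc]
  have scc_hA2_hh : α2 * h = h * α2 := (hh α2).symm
  have tcc_hA2_hh : ∀ r : R, α2 * (h * r) = h * (α2 * r) := fun r => by rw [← mul_assoc, (hh α2).symm, mul_assoc]
  have scc_hA2_hA1 : α2 * α1 = α1 * α2 := (hA1 α2).symm
  have tcc_hA2_hA1 : ∀ r : R, α2 * (α1 * r) = α1 * (α2 * r) := fun r => by rw [← mul_assoc, (hA1 α2).symm, mul_assoc]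
  have scc_ht1_hh : t1 * h = h * t1 := (hh t1).symm
  have tcc_ht1_hh : ∀ r : R, t1 * (h * r) = h * (t1 * r) := fun r => by rw [← mul_assoc, (hh t1).symm, mul_assoc]
  have scc_ht1_hA1 : t1 * α1 = α1 * t1 := (hA1 t1).symm
  have tcc_ht1_hA1 : ∀ r : R, t1 * (α1 * r) = α1 * (t1 * r) := fun r => by rw [← mul_assoc, (hA1 t1).symm, mul_assoc]
  have scc_ht1_hA2 : t1 * α2 = α2 * t1 := (hA2 t1).symm
  have tcc_ht1_hA2 : ∀ r : R, t1 * (α2 * r) = α2 * (t1 * r) := fun r => by rw [← mul_assoc, (hA2 t1).symm, mul_assoc]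
  have scc_ht2_hh : t2 * h = h * t2 := (hh t2).symm
  have tcc_ht2_hh : ∀ r : R, t2 * (h * r) = h * (t2 * r) := fun r => by rw [← mul_assoc, (hh t2).symm, mul_assoc]
  have scc_ht2_hA1 : t2 * α1 = α1 * t2 := (hA1 t2).symm
  have tcc_ht2_hA1 : ∀ r : R, t2 * (α1 * r) = α1 * (t2 * r) := fun r => by rw [← mul_assoc, (hA1 t2).symm, mul_assoc]
  have scc_ht2_hA2 : t2 * α2 = α2 * t2 := (hA2 t2).symm
  have tcc_ht2_hA2 : ∀ r : R, t2 * (α2 * r) = α2 * (t2 * r) := fun r => by rw [← mul_assoc, (hA2 t2).symm, mul_assoc]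
  have scc_ht2_ht1 : t2 * t1 = t1 * t2 := (ht1 t2).symm
  have tcc_ht2_ht1 : ∀ r : R, t2 * (t1 * r) = t1 * (t2 * r) := fun r => by rw [← mul_assoc, (ht1 t2).symm, mul_assoc]
  have sn2_x1 : x1 * 2 = 2 * x1 := ((Commute.ofNat_right x1 2).eq)
  have tn2_x1 : ∀ r : R, x1 * (2 * r) = 2 * (x1 * r) := fun r => by rw [← mul_assoc, (Commute.ofNat_right x1 2).eq, mul_assoc]
  have sn2_x1i : x1i * 2 = 2 * x1i := ((Commute.ofNat_right x1i 2).eq)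
  have tn2_x1i : ∀ r : R, x1i * (2 * r) = 2 * (x1i * r) := fun r => by rw [← mul_assoc, (Commute.ofNat_right x1i 2).eq, mul_assoc]
  have sn2_x2 : x2 * 2 = 2 * x2 := ((Commute.ofNat_right x2 2).eq)
  have tn2_x2 : ∀ r : R, x2 * (2 * r) = 2 * (x2 * r) := fun r => by rw [← mul_assoc, (Commute.ofNat_right x2 2).eq, mul_assoc]
  have sn2_y1 : y1 * 2 = 2 * y1 := ((Commute.ofNat_right y1 2).eq)
  have tn2_y1 : ∀ r : R, y1 * (2 * r) = 2 * (y1 * r) := fun r => by rw [← mul_assoc, (Commute.ofNat_right y1 2).eq, mul_assoc]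
  have sn2_y2 : y2 * 2 = 2 * y2 := ((Commute.ofNat_right y2 2).eq)
  have tn2_y2 : ∀ r : R, y2 * (2 * r) = 2 * (y2 * r) := fun r => by rw [← mul_assoc, (Commute.ofNat_right y2 2).eq, mul_assoc]
  have sn2_h : h * 2 = 2 * h := ((Commute.ofNat_right h 2).eq)
  have tn2_h : ∀ r : R, h * (2 * r) = 2 * (h * r) := fun r => by rw [← mul_assoc, (Commute.ofNat_right h 2).eq, mul_assoc]
  have sn2_α1 : α1 * 2 = 2 * α1 := ((Commute.ofNat_right α1 2).eq)
  have tn2_α1 : ∀ r : R, α1 * (2 * r) = 2 * (α1 * r) := fun r => by rw [← mul_assoc, (Commute.ofNat_right α1 2).eq, mul_assoc]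
  have sn2_α2 : α2 * 2 = 2 * α2 := ((Commute.ofNat_right α2 2).eq)
  have tn2_α2 : ∀ r : R, α2 * (2 * r) = 2 * (α2 * r) := fun r => by rw [← mul_assoc, (Commute.ofNat_right α2 2).eq, mul_assoc]
  have sn2_t1 : t1 * 2 = 2 * t1 := ((Commute.ofNat_right t1 2).eq)
  have tn2_t1 : ∀ r : R, t1 * (2 * r) = 2 * (t1 * r) := fun r => by rw [← mul_assoc, (Commute.ofNat_right t1 2).eq, mul_assoc]
  have sn2_t2 : t2 * 2 = 2 * t2 := ((Commute.ofNat_right t2 2).eq)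
  have tn2_t2 : ∀ r : R, t2 * (2 * r) = 2 * (t2 * r) := fun r => by rw [← mul_assoc, (Commute.ofNat_right t2 2).eq, mul_assoc]
  have sn4_x1 : x1 * 4 = 4 * x1 := ((Commute.ofNat_right x1 4).eq)
  have tn4_x1 : ∀ r : R, x1 * (4 * r) = 4 * (x1 * r) := fun r => by rw [← mul_assoc, (Commute.ofNat_right x1 4).eq, mul_assoc]
  have sn4_x1i : x1i * 4 = 4 * x1i := ((Commute.ofNat_right x1i 4).eq)
  have tn4_x1i : ∀ r : R, x1i * (4 * r) = 4 * (x1i * r) := fun r => by rw [← mul_assoc, (Commute.ofNat_right x1i 4).eq, mul_assoc]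
  have sn4_x2 : x2 * 4 = 4 * x2 := ((Commute.ofNat_right x2 4).eq)
  have tn4_x2 : ∀ r : R, x2 * (4 * r) = 4 * (x2 * r) := fun r => by rw [← mul_assoc, (Commute.ofNat_right x2 4).eq, mul_assoc]
  have sn4_y1 : y1 * 4 = 4 * y1 := ((Commute.ofNat_right y1 4).eq)
  have tn4_y1 : ∀ r : R, y1 * (4 * r) = 4 * (y1 * r) := fun r => by rw [← mul_assoc, (Commute.ofNat_right y1 4).eq, mul_assoc]
  have sn4_y2 : y2 * 4 = 4 * y2 := ((Commute.ofNat_right y2 4).eq)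
  have tn4_y2 : ∀ r : R, y2 * (4 * r) = 4 * (y2 * r) := fun r => by rw [← mul_assoc, (Commute.ofNat_right y2 4).eq, mul_assoc]
  have sn4_h : h * 4 = 4 * h := ((Commute.ofNat_right h 4).eq)
  have tn4_h : ∀ r : R, h * (4 * r) = 4 * (h * r) := fun r => by rw [← mul_assoc, (Commute.ofNat_right h 4).eq, mul_assoc]
  have sn4_α1 : α1 * 4 = 4 * α1 := ((Commute.ofNat_right α1 4).eq)
  have tn4_α1 : ∀ r : R, α1 * (4 * r) = 4 * (α1 * r) := fun r => by rw [← mul_assoc, (Commute.ofNat_right α1 4).eq, mul_assoc]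
  have sn4_α2 : α2 * 4 = 4 * α2 := ((Commute.ofNat_right α2 4).eq)
  have tn4_α2 : ∀ r : R, α2 * (4 * r) = 4 * (α2 * r) := fun r => by rw [← mul_assoc, (Commute.ofNat_right α2 4).eq, mul_assoc]
  have sn4_t1 : t1 * 4 = 4 * t1 := ((Commute.ofNat_right t1 4).eq)
  have tn4_t1 : ∀ r : R, t1 * (4 * r) = 4 * (t1 * r) := fun r => by rw [← mul_assoc, (Commute.ofNat_right t1 4).eq, mul_assoc]
  have sn4_t2 : t2 * 4 = 4 * t2 := ((Commute.ofNat_right t2 4).eq)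
  have tn4_t2 : ∀ r : R, t2 * (4 * r) = 4 * (t2 * r) := fun r => by rw [← mul_assoc, (Commute.ofNat_right t2 4).eq, mul_assoc]
  refine ⟨?_, ?_, ?_, ?_, ?_, ?_⟩ <;>
  · simp only [pow_two, pow_three, mul_add, add_mul, mul_sub, sub_mul, mul_neg, neg_mul, neg_neg, mul_one, one_mul, mul_assoc, hx1il, hx1ir, t_x2x1, t_y1x1, t_y2x1, t_y1x2, t_y2x2, t_y2y1, t_x2x1i, t_y2x1i, t_y1x1i, s_x2x1, s_y1x1, s_y2x1, s_y1x2, s_y2x2, s_y2y1, s_x2x1i, s_y2x1i, s_y1x1i, i1, i2, sc_hh_x1, tc_hh_x1, sc_hh_x1i, tc_hh_x1i, sc_hh_x2, tc_hh_x2, sc_hh_y1, tc_hh_y1, sc_hh_y2, tc_hh_y2, sc_hA1_x1, tc_hA1_x1, sc_hA1_x1i, tc_hA1_x1i, sc_hA1_x2, tc_hA1_x2, sc_hA1_y1, tc_hA1_y1, sc_hA1_y2, tc_hA1_y2, sc_hA2_x1, tc_hA2_x1, sc_hA2_x1i, tc_hA2_x1i, sc_hA2_x2, tc_hA2_x2,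 sc_hA2_y1, tc_hA2_y1, sc_hA2_y2, tc_hA2_y2, sc_ht1_x1, tc_ht1_x1, sc_ht1_x1i, tc_ht1_x1i, sc_ht1_x2, tc_ht1_x2, sc_ht1_y1, tc_ht1_y1, sc_ht1_y2, tc_ht1_y2, sc_ht2_x1, tc_ht2_x1, sc_ht2_x1i, tc_ht2_x1i, sc_ht2_x2, tc_ht2_x2, sc_ht2_y1, tc_ht2_y1, sc_ht2_y2, tc_ht2_y2, scc_hA1_hh, tcc_hA1_hh, scc_hA2_hh, tcc_hA2_hh, scc_hA2_hA1, tcc_hA2_hA1, scc_ht1_hh, tcc_ht1_hh, scc_ht1_hA1, tcc_ht1_hA1, scc_ht1_hA2, tcc_ht1_hA2, scc_ht2_hh, tcc_ht2_hh, scc_ht2_hA1, tcc_ht2_hA1, scc_ht2_hA2, tcc_ht2_hA2, scc_ht2_ht1, tcc_ht2_ht1, sn2_x1, tn2_x1, sn2_x1i, tn2_x1i, sn2_x2, tn2_x2, sn2_y1, tn2_y1, sn2_y2, tn2_y2, sn2_h, tn2_h, sn2_α1, tn2_α1, sn2_α2, tn2_α2, sn2_t1, tn2_t1, sn2_t2,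 tn2_t2, sn4_x1, tn4_x1, sn4_x1i, tn4_x1i, sn4_x2, tn4_x2, sn4_y1, tn4_y1, sn4_y2, tn4_y2, sn4_h, tn4_h, sn4_α1, tn4_α1, sn4_α2, tn4_α2, sn4_t1, tn4_t1, sn4_t2, tn4_t2]
    noncomm_ring
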